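/- Let R be the Novikov ring over a field k (formal series ∑ a_λ t^λ with λ ranging over a discrete subset of [0,∞)). Then for any R-linear map f : V → W between finite rank free R-modules, there exist bases b₁,…,b_m of V and c₁,…,c_n of W, a natural number r ≤ min(m,n), and real numbers 0 ≤ λ₁ ≤ … ≤ λ_r, such that f(b_i) = t^{λ_i} c_i for 1 ≤ i ≤ r and f(b_i) = 0 for r < i ≤ m. -/

import Mathlib

/-- The Novikov ring over a field k, modelled as Hahn series with exponents in
ℝ≥0 (formal series ∑ a_λ t^λ with well-ordered support in [0,∞)). -/
abbrev Nov (k : Type*) [Field k] : Type _ := HahnSeries NNReal k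

/-- The monomial t^λ in the Novikov ring. -/
noncomputable def tpow (k : Type*) [Field k] (l : NNReal) : Nov k :=
  HahnSeries.single l 1

noncomputable section

namespace NovAux

open HahnSeries

variable {k : Type*} [Field k]

def embO : NNReal ↪o ℝ := ⟨⟨NNReal.toRealHom.toAddMonoidHom, NNReal.coe_injective⟩,
  fun {_ _} => NNReal.coe_le_coe⟩

def emb (k : Type*) [Field k] : Nov k →+* HahnSeries ℝ k :=
  HahnSeries.embDomainRingHom NNReal.toRealHom.toAddMonoidHom NNReal.coe_injective
    (fun _ _ => NNReal.coe_le_coe)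

theorem emb_coeff (x : Nov k) (a : NNReal) : (emb k x).coeff (a : ℝ) = x.coeff a :=
  HahnSeries.embDomain_coeff

theorem emb_injective : Function.Injective (emb k) :=
  HahnSeries.embDomain_injective

theorem emb_ne_zero {x : Nov k} (hx : x ≠ 0) : emb k x ≠ 0 := by
  intro h
  exact hx (emb_injective (by simpa using h))

theorem emb_order {x : Nov k} (hx : x ≠ 0) : (emb k x).order = (x.order : ℝ) := by
  have h1 : (emb k x).orderTop = ((x.order : ℝ) : WithTop ℝ) := by
    apply HahnSeries.orderTop_eq_of_le
    · rw [HahnSeries.mem_support, emb_coeff]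
      exact mt coeff_order_eq_zero.1 hx
    · intro g' hg'
      obtain ⟨a, ha, rfl⟩ := HahnSeries.support_embDomain_subset hg'
      exact_mod_cast NNReal.coe_le_coe.2 (HahnSeries.order_le_of_coeff_ne_zero ha)
  have h2 := HahnSeries.order_eq_orderTop_of_ne_zero (emb_ne_zero hx)
  rw [h1] at h2
  exact_mod_cast h2

theorem exists_preimage {q : HahnSeries ℝ k}
    (hsupp : q.support ⊆ Set.range ((↑) : NNReal → ℝ)) :
    ∃ c : Nov k, emb k c = q := by
  have hwf : (Function.support fun a : NNReal => q.coeff (a : ℝ)).IsPWO := by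
    rw [Set.isPWO_iff_isWF, Set.isWF_iff_no_descending_seq]
    intro f hf hmem
    have : ∀ n : ℕ, ((f (OrderDual.toDual n) : ℝ)) ∈ q.support := fun n => hmem n
    have hq := q.isWF_support
    rw [Set.isWF_iff_no_descending_seq] at hq
    exact hq (fun n => (f n : ℝ)) (fun a b hab => NNReal.coe_lt_coe.2 (hf hab)) this
  refine ⟨⟨fun a => q.coeff (a : ℝ), hwf⟩, ?_⟩
  ext g
  by_cases hg : g ∈ Set.range ((↑) : NNReal → ℝ)
  · obtain ⟨a, rfl⟩ := hg
    exact emb_coeff _ a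
  · rw [show (emb k _).coeff g = 0 from HahnSeries.embDomain_notin_range hg]
    by_contra h
    exact hg (hsupp (by simpa using fun hh => h hh.symm))

theorem nov_dvd {a b : Nov k} (ha : a ≠ 0) (h : a.order ≤ b.order) : a ∣ b := by
  by_cases hb : b = 0
  · simp [hb]
  set q : HahnSeries ℝ k := emb k b / emb k a with hq
  have hea := emb_ne_zero ha
  have heb := emb_ne_zero hb
  have hqa : q * emb k a = emb k b := div_mul_cancel₀ _ hea
  have hqne : q ≠ 0 := by
    intro h0
    rw [h0, zero_mul] at hqa
    exact heb hqa.symm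
  have horder : q.order = (b.order : ℝ) - (a.order : ℝ) := by
    have := HahnSeries.order_mul hqne hea
    rw [hqa, emb_order ha, emb_order hb] at this
    linarith
  have hqnonneg : (0 : ℝ) ≤ q.order := by
    rw [horder]
    have := NNReal.coe_le_coe.2 h
    linarith
  have hsupp : q.support ⊆ Set.range ((↑) : NNReal → ℝ) := by
    intro g hg
    have : q.order ≤ g := HahnSeries.order_le_of_coeff_ne_zero hg
    exact ⟨⟨g, le_trans hqnonneg this⟩, rfl⟩
  obtain ⟨c, hc⟩ := exists_preimage hsupp
  refine ⟨c, ?_⟩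
  apply emb_injective
  rw [map_mul, hc, mul_comm, hqa]



section Gadgets

variable {R : Type*} [CommRing R] {N : ℕ}

/-- linear functional v ↦ ∑ v i * w i -/
def dotL (w : Fin N → R) : (Fin N → R) →ₗ[R] R where
  toFun v := ∑ i, v i * w i
  map_add' u v := by simp [add_mul, Finset.sum_add_distrib]
  map_smul' c v := by simp [Finset.mul_sum, mul_assoc]

theorem dotL_apply (w v : Fin N → R) : dotL w v = ∑ i, v i * w i := rfl

theorem dotL_single (w : Fin N → R) (j : Fin N) :
    dotL w ((Pi.single j 1 : Fin N → R)) = w j := by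
  simp [dotL_apply, Pi.single_apply, ite_mul]

/-- column shear: v ↦ v - (∑ v i * w i) • e_{i₀}, an equivalence when w i₀ = 0 -/
def shearCol (w : Fin N → R) (i₀ : Fin N) (hw : w i₀ = 0) :
    (Fin N → R) ≃ₗ[R] (Fin N → R) := by
  refine LinearEquiv.ofLinear
    (LinearMap.id - (dotL w).smulRight ((Pi.single i₀ 1 : Fin N → R)))
    (LinearMap.id + (dotL w).smulRight ((Pi.single i₀ 1 : Fin N → R))) ?_ ?_ <;>
  · refine LinearMap.ext fun v => ?_
    have h : ∀ c : R, dotL w (c • (Pi.single i₀ 1 : Fin N → R)) = 0 := fun c => by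
      rw [map_smul, dotL_single, hw, smul_eq_mul, mul_zero]
    simp only [LinearMap.coe_comp, Function.comp_apply, LinearMap.add_apply, LinearMap.sub_apply,
      LinearMap.id_apply, LinearMap.smulRight_apply, map_add, map_sub, h, add_zero, sub_zero,
      LinearMap.id_coe, id_eq, zero_smul]
    abel

theorem shearCol_single (w : Fin N → R) (i₀ : Fin N) (hw : w i₀ = 0) (j : Fin N) :
    shearCol w i₀ hw (Pi.single j 1) =
      (Pi.single j 1 : Fin N → R) - w j • (Pi.single i₀ 1 : Fin N → R) := by
  simp [shearCol, dotL_single]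

/-- row shear: v ↦ v + v j₀ • u, an equivalence when u j₀ = 0 -/
def shearRow (u : Fin N → R) (j₀ : Fin N) (hu : u j₀ = 0) :
    (Fin N → R) ≃ₗ[R] (Fin N → R) := by
  refine LinearEquiv.ofLinear
    (LinearMap.id + (LinearMap.proj j₀ : (Fin N → R) →ₗ[R] R).smulRight u)
    (LinearMap.id - (LinearMap.proj j₀ : (Fin N → R) →ₗ[R] R).smulRight u) ?_ ?_ <;>
  · refine LinearMap.ext fun v => ?_
    simp only [LinearMap.coe_comp, Function.comp_apply, LinearMap.add_apply, LinearMap.sub_apply,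
      LinearMap.id_apply, LinearMap.smulRight_apply, LinearMap.proj_apply, LinearMap.id_coe, id_eq,
      Pi.add_apply, Pi.sub_apply, Pi.smul_apply, hu, smul_eq_mul, mul_zero, add_zero, sub_zero]
    abel

theorem shearRow_single (u : Fin N → R) (j₀ : Fin N) (hu : u j₀ = 0) (j : Fin N) :
    shearRow u j₀ hu (Pi.single j 1) =
      (Pi.single j 1 : Fin N → R) + ((Pi.single j 1 : Fin N → R) j₀) • u := by
  simp [shearRow]

/-- linear map on Fin (N+1) → R acting as identity on coordinate 0 and as E on the tail -/
def consMap (E : (Fin N → R) →ₗ[R] (Fin N → R)) :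
    (Fin (N+1) → R) →ₗ[R] (Fin (N+1) → R) where
  toFun v := Fin.cons (v 0) (E (Fin.tail v))
  map_add' u v := by
    have ht : Fin.tail (u + v) = Fin.tail u + Fin.tail v := rfl
    funext j
    refine Fin.cases ?_ (fun j => ?_) j <;> simp [ht]
  map_smul' c v := by
    have ht : Fin.tail (c • v) = c • Fin.tail v := rfl
    funext j
    refine Fin.cases ?_ (fun j => ?_) j <;> simp [ht]

theorem consMap_apply (E : (Fin N → R) →ₗ[R] (Fin N → R)) (v : Fin (N+1) → R) :
    consMap E v = Fin.cons (v 0) (E (Fin.tail v)) := rfl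

/-- block-diagonal equivalence 1 ⊕ E on Fin (N+1) → R -/
def consEquiv (E : (Fin N → R) ≃ₗ[R] (Fin N → R)) :
    (Fin (N+1) → R) ≃ₗ[R] (Fin (N+1) → R) := by
  refine LinearEquiv.ofLinear (consMap E.toLinearMap) (consMap E.symm.toLinearMap) ?_ ?_ <;>
  · refine LinearMap.ext fun v => ?_
    simp [consMap_apply, Fin.tail_cons, Fin.cons_self_tail]

theorem consEquiv_apply (E : (Fin N → R) ≃ₗ[R] (Fin N → R)) (v : Fin (N+1) → R) :
    consEquiv E v = Fin.cons (v 0) (E (Fin.tail v)) := rfl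

theorem tail_single_zero : Fin.tail (Pi.single 0 1 : Fin (N+1) → R) = 0 := by
  funext j
  simp [Fin.tail, Pi.single_apply, (Fin.succ_ne_zero j)]

theorem tail_single_succ (i : Fin N) :
    Fin.tail (Pi.single i.succ 1 : Fin (N+1) → R) = Pi.single i 1 := by
  funext j
  simp [Fin.tail, Pi.single_apply, Fin.succ_inj]

theorem cons_one_zero : (Fin.cons 1 0 : Fin (N+1) → R) = Pi.single 0 1 := by
  funext j
  refine Fin.cases ?_ (fun j => ?_) j <;>
    simp [Pi.single_apply, (Fin.succ_ne_zero j).symm]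

theorem equivFun_symm_single {M : Type*} [AddCommGroup M] [Module R M]
    {ι : Type*} [Fintype ι] [DecidableEq ι] (u : Module.Basis ι R M) (i : ι) :
    u.equivFun.symm (Pi.single i 1) = u i := by
  rw [Module.Basis.equivFun_symm_apply]
  simp [Pi.single_apply, ite_smul]

variable {M : Type*} [AddCommGroup M] [Module R M]

/-- Combine a basis `u` of `M` (indexed by `Fin (N+1)`) with a basis `β` of `Fin N → R`:
the new basis keeps `u 0` and replaces `u (j.succ)` by the `β`-combinations. -/
def consBasis (u : Module.Basis (Fin (N+1)) R M) (β : Module.Basis (Fin N) R (Fin N → R)) :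
    Module.Basis (Fin (N+1)) R M :=
  ((Pi.basisFun R (Fin (N+1))).map (consEquiv β.equivFun.symm)).map u.equivFun.symm

theorem consBasis_zero (u : Module.Basis (Fin (N+1)) R M) (β : Module.Basis (Fin N) R (Fin N → R)) :
    consBasis u β 0 = u 0 := by
  rw [consBasis, Module.Basis.map_apply, Module.Basis.map_apply, Pi.basisFun_apply, consEquiv_apply,
    tail_single_zero]
  simp only [Pi.single_apply, if_pos rfl, map_zero, if_true]
  rw [cons_one_zero, equivFun_symm_single]

theorem consBasis_succ (u : Module.Basis (Fin (N+1)) R M) (β : Module.Basis (Fin N) R (Fin N → R))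
    (i : Fin N) : consBasis u β i.succ = ∑ j, β i j • u j.succ := by
  rw [consBasis, Module.Basis.map_apply, Module.Basis.map_apply, Pi.basisFun_apply, consEquiv_apply,
    tail_single_succ, equivFun_symm_single]
  have h0 : (Pi.single i.succ 1 : Fin (N+1) → R) 0 = 0 := by
    simp [Pi.single_apply, Fin.succ_ne_zero i]
  rw [h0, Module.Basis.equivFun_symm_apply, Fin.sum_univ_succ]
  simp

/-- rotation of `Fin (N+1)` sending `j₀` to `0` and `j₀.succAbove l` to `l.succ`. -/
def rotEquiv (j₀ : Fin (N+1)) : Fin (N+1) ≃ Fin (N+1) :=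
  (finSuccEquiv' j₀).trans (finSuccEquiv N).symm

theorem rotEquiv_symm_zero (j₀ : Fin (N+1)) : (rotEquiv j₀).symm 0 = j₀ := by
  simp [rotEquiv, finSuccEquiv_zero, finSuccEquiv'_symm_none]

theorem rotEquiv_symm_succ (j₀ : Fin (N+1)) (l : Fin N) :
    (rotEquiv j₀).symm l.succ = j₀.succAbove l := by
  simp [rotEquiv, finSuccEquiv_succ, finSuccEquiv'_symm_some]

theorem sum_single_succAbove (j₀ : Fin (N+1)) (z : Fin (N+1) → R) (hz : z j₀ = 0) :
    ∑ j, z (j₀.succAbove j) • (Pi.single (j₀.succAbove j) 1 : Fin (N+1) → R) = z := by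
  have key : ∀ (j' : Fin (N+1)) (c : R),
      c • (Pi.single j' 1 : Fin (N+1) → R) = Pi.single j' c := by
    intro j' c
    rw [← Pi.single_smul, smul_eq_mul, mul_one]
  simp only [key]
  have h := Fin.sum_univ_succAbove (fun j' => (Pi.single j' (z j') : Fin (N+1) → R)) j₀
  rw [Finset.univ_sum_single] at h
  rw [hz] at h
  simp only [Pi.single_zero, zero_add] at h
  exact h.symm

end Gadgets





theorem order_tpow (l : NNReal) : (tpow k l).order = l :=
  HahnSeries.order_single one_ne_zero

theorem tpow_ne_zero (l : NNReal) : tpow k l ≠ (0 : Nov k) :=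
  HahnSeries.single_ne_zero one_ne_zero

theorem dvd_order {a b : Nov k} (hb : b ≠ 0) (h : a ∣ b) : a.order ≤ b.order := by
  obtain ⟨c, rfl⟩ := h
  have ha : a ≠ 0 := left_ne_zero_of_mul hb
  have hc : c ≠ 0 := right_ne_zero_of_mul hb
  rw [HahnSeries.order_mul ha hc]
  exact le_self_add

theorem dvd_total (a b : Nov k) : a ∣ b ∨ b ∣ a := by
  by_cases ha : a = 0
  · exact Or.inr (ha ▸ dvd_zero b)
  by_cases hb : b = 0
  · exact Or.inl (hb ▸ dvd_zero a)
  rcases le_total a.order b.order with h | h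
  · exact Or.inl (nov_dvd ha h)
  · exact Or.inr (nov_dvd hb h)

theorem exists_unit {a : Nov k} (ha : a ≠ 0) : ∃ u : (Nov k)ˣ, tpow k a.order * u = a := by
  have h1 : tpow k a.order ∣ a := nov_dvd (tpow_ne_zero _) (by rw [order_tpow])
  have h2 : a ∣ tpow k a.order := nov_dvd ha (by rw [order_tpow])
  exact associated_of_dvd_dvd h1 h2

theorem exists_dvd_min {ι : Type*} (s : Finset ι) (hs : s.Nonempty) (f : ι → Nov k) :
    ∃ i ∈ s, ∀ j ∈ s, f i ∣ f j := by
  classical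
  induction s using Finset.induction_on with
  | empty => exact absurd hs (by simp)
  | @insert a s ha ih =>
    by_cases hsne : s.Nonempty
    · obtain ⟨i, hi, hmin⟩ := ih hsne
      rcases dvd_total (f a) (f i) with hd | hd
      · refine ⟨a, Finset.mem_insert_self a s, fun j hj => ?_⟩
        rcases Finset.mem_insert.1 hj with rfl | hj
        · exact dvd_rfl
        · exact hd.trans (hmin j hj)
      · refine ⟨i, Finset.mem_insert_of_mem hi, fun j hj => ?_⟩
        rcases Finset.mem_insert.1 hj with rfl | hj
        · exact hd
        · exact hmin j hj
    · refine ⟨a, Finset.mem_insert_self a s, fun j hj => ?_⟩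
      rcases Finset.mem_insert.1 hj with rfl | hj
      · exact dvd_rfl
      · exact absurd ⟨j, hj⟩ hsne


set_option maxHeartbeats 1000000 in
theorem snf_core (k : Type*) [Field k] :
    ∀ (m : ℕ) (n : ℕ) (f : (Fin m → Nov k) →ₗ[Nov k] (Fin n → Nov k)),
    ∃ (b : Module.Basis (Fin m) (Nov k) (Fin m → Nov k))
      (c : Module.Basis (Fin n) (Nov k) (Fin n → Nov k))
      (r : ℕ) (hr : r ≤ min m n) (d : Fin r → Nov k),
      (∀ i, d i ≠ 0) ∧
      (∀ i j : Fin r, i ≤ j → d i ∣ d j) ∧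
      (∀ (i : Fin m) (h : (i : ℕ) < r),
          f (b i) = d ⟨i, h⟩ • c ⟨i, lt_of_lt_of_le h (hr.trans (min_le_right m n))⟩) ∧
      (∀ i : Fin m, r ≤ (i : ℕ) → f (b i) = 0) := by
  intro m
  induction m with
  | zero =>
    intro n f
    exact ⟨Pi.basisFun _ _, Pi.basisFun _ _, 0, Nat.zero_le _, Fin.elim0,
      fun i => i.elim0, fun i => i.elim0, fun i h => absurd h (Nat.not_lt_zero _),
      fun i _ => i.elim0⟩
  | succ m IH =>
    intro n f
    by_cases hf : f = 0
    · exact ⟨Pi.basisFun _ _, Pi.basisFun _ _, 0, Nat.zero_le _, Fin.elim0,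
        fun i => i.elim0, fun i => i.elim0, fun i h => absurd h (Nat.not_lt_zero _),
        fun i _ => by rw [hf]; rfl⟩
    -- there is a nonzero matrix entry
    have hex : ∃ pr : Fin (m+1) × Fin n, f (Pi.single pr.1 1) pr.2 ≠ 0 := by
      by_contra hcon
      push_neg at hcon
      apply hf
      apply Module.Basis.ext (Pi.basisFun (Nov k) (Fin (m+1)))
      intro i
      rw [Pi.basisFun_apply, LinearMap.zero_apply]
      funext j
      exact hcon (i, j)
    obtain ⟨⟨i₁, j₁⟩, hA1⟩ := hex
    obtain ⟨n', rfl⟩ : ∃ n', n = n' + 1 := ⟨n - 1, (Nat.succ_pred_eq_of_pos j₁.pos).symm⟩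
    -- divisibility-minimal entry (the pivot)
    obtain ⟨⟨i₀, j₀⟩, -, hmin⟩ := exists_dvd_min (Finset.univ)
      ⟨(i₁, j₁), Finset.mem_univ _⟩
      (fun pr : Fin (m+1) × Fin (n'+1) => f (Pi.single pr.1 1) pr.2)
    have hdvd : ∀ i j, f (Pi.single i₀ 1) j₀ ∣ f (Pi.single i 1) j :=
      fun i j => hmin (i, j) (Finset.mem_univ _)
    set p : Nov k := f (Pi.single i₀ 1) j₀ with hp_def
    have hp : p ≠ 0 := fun h0 => hA1 (zero_dvd_iff.mp (h0 ▸ hdvd i₁ j₁))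
    choose q hq using fun i j => hdvd i j
    have hq00 : q i₀ j₀ = 1 := by
      have h1 : p * 1 = p * q i₀ j₀ := by rw [mul_one]; exact hq i₀ j₀
      exact (mul_left_cancel₀ hp h1).symm
    -- shears
    set w : Fin (m+1) → Nov k := fun i => if i = i₀ then 0 else q i j₀ with hw_def
    have hw : w i₀ = 0 := if_pos rfl
    set u : Fin (n'+1) → Nov k := fun j => if j = j₀ then 0 else q i₀ j with hu_def
    have hu : u j₀ = 0 := if_pos rfl
    set b' : Module.Basis (Fin (m+1)) (Nov k) (Fin (m+1) → Nov k) :=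
      (Pi.basisFun (Nov k) (Fin (m+1))).map (shearCol w i₀ hw) with hb'_def
    set c' : Module.Basis (Fin (n'+1)) (Nov k) (Fin (n'+1) → Nov k) :=
      (Pi.basisFun (Nov k) (Fin (n'+1))).map (shearRow u j₀ hu) with hc'_def
    have hb'val : ∀ i, b' i =
        (Pi.single i 1 : Fin (m+1) → Nov k) - w i • (Pi.single i₀ 1 : Fin (m+1) → Nov k) := by
      intro i
      rw [hb'_def, Module.Basis.map_apply, Pi.basisFun_apply, shearCol_single]
    have hc'val_ne : ∀ j, j ≠ j₀ → c' j = (Pi.single j 1 : Fin (n'+1) → Nov k) := by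
      intro j hj
      rw [hc'_def, Module.Basis.map_apply, Pi.basisFun_apply, shearRow_single]
      rw [show (Pi.single j 1 : Fin (n'+1) → Nov k) j₀ = 0 by
        simp [Pi.single_apply, hj]]
      simp
    have hc'val0 : c' j₀ = fun j => q i₀ j := by
      rw [hc'_def, Module.Basis.map_apply, Pi.basisFun_apply, shearRow_single]
      funext j'
      by_cases hj : j' = j₀
      · subst hj
        simp [hu, hq00]
      · simp [Pi.single_apply, hj, Ne.symm hj, hu_def]
    -- reindexed bases with pivot at 0
    set bB := b'.reindex (rotEquiv i₀) with hbB_def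
    set cC := c'.reindex (rotEquiv j₀) with hcC_def
    have hbB0 : bB 0 = b' i₀ := by rw [hbB_def, Module.Basis.reindex_apply, rotEquiv_symm_zero]
    have hbBs : ∀ i : Fin m, bB i.succ = b' (i₀.succAbove i) := fun i => by
      rw [hbB_def, Module.Basis.reindex_apply, rotEquiv_symm_succ]
    have hcC0 : cC 0 = c' j₀ := by rw [hcC_def, Module.Basis.reindex_apply, rotEquiv_symm_zero]
    have hcCs : ∀ l : Fin n', cC l.succ = Pi.single (j₀.succAbove l) 1 := fun l => by
      rw [hcC_def, Module.Basis.reindex_apply, rotEquiv_symm_succ,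
        hc'val_ne _ (Fin.succAbove_ne j₀ l)]
    -- the pivot relation
    have hf0 : f (bB 0) = p • cC 0 := by
      rw [hbB0, hcC0, hb'val, hw, zero_smul, sub_zero, hc'val0]
      funext j
      rw [Pi.smul_apply, smul_eq_mul, ← hq]
    -- the residual map
    set s : Fin m → Fin n' → Nov k := fun i j =>
      q (i₀.succAbove i) (j₀.succAbove j) - q (i₀.succAbove i) j₀ * q i₀ (j₀.succAbove j)
      with hs_def
    set κ : (Fin n' → Nov k) →ₗ[Nov k] (Fin (n'+1) → Nov k) :=
      (Pi.basisFun (Nov k) (Fin n')).constr (Nov k) (fun j => cC j.succ) with hκ_def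
    have hκ : ∀ v, κ v = ∑ j, v j • cC j.succ := by
      intro v
      rw [hκ_def, Module.Basis.constr_apply_fintype]
      simp [Pi.basisFun_equivFun]
    set ιB : (Fin m → Nov k) →ₗ[Nov k] (Fin (m+1) → Nov k) :=
      (Pi.basisFun (Nov k) (Fin m)).constr (Nov k) (fun i => bB i.succ) with hιB_def
    have hιB : ∀ v, ιB v = ∑ i, v i • bB i.succ := by
      intro v
      rw [hιB_def, Module.Basis.constr_apply_fintype]
      simp [Pi.basisFun_equivFun]
    set g : (Fin m → Nov k) →ₗ[Nov k] (Fin n' → Nov k) :=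
      (Pi.basisFun (Nov k) (Fin m)).constr (Nov k) s with hg_def
    -- key computation
    have KC : ∀ i : Fin m, f (bB i.succ) = p • κ (s i) := by
      intro i
      have hai : i₀.succAbove i ≠ i₀ := Fin.succAbove_ne i₀ i
      have hwa : w (i₀.succAbove i) = q (i₀.succAbove i) j₀ := if_neg hai
      have hz : (fun j' => q (i₀.succAbove i) j' - q (i₀.succAbove i) j₀ * q i₀ j') j₀
          = 0 := by
        simp only [hq00, mul_one, sub_self]
      rw [hbBs i, hb'val, map_sub, map_smul]
      calc f (Pi.single (i₀.succAbove i) 1) - w (i₀.succAbove i) • f (Pi.single i₀ 1)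
          = fun j' => p * (q (i₀.succAbove i) j' - q (i₀.succAbove i) j₀ * q i₀ j') := by
            funext j'
            rw [Pi.sub_apply, Pi.smul_apply, hwa, smul_eq_mul, hq (i₀.succAbove i) j',
              hq i₀ j']
            ring
        _ = p • κ (s i) := by
            rw [hκ]
            have hsum : (∑ l, s i l • cC l.succ)
                = fun j' => q (i₀.succAbove i) j' - q (i₀.succAbove i) j₀ * q i₀ j' := by
              have hz' := sum_single_succAbove j₀
                (fun j' => q (i₀.succAbove i) j' - q (i₀.succAbove i) j₀ * q i₀ j') hz
              rw [← hz']
              apply Finset.sum_congr rfl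
              intro l _
              rw [hcCs l]
            rw [hsum]
            funext j'
            rw [Pi.smul_apply, smul_eq_mul]
    -- the factorization f ∘ ιB = p • (κ ∘ g)
    have hrel : ∀ v, f (ιB v) = p • κ (g v) := by
      have heq : f ∘ₗ ιB = p • (κ ∘ₗ g) := by
        apply Module.Basis.ext (Pi.basisFun (Nov k) (Fin m))
        intro i
        rw [LinearMap.comp_apply, LinearMap.smul_apply, LinearMap.comp_apply,
          hιB_def, Module.Basis.constr_basis, hg_def, Module.Basis.constr_basis]
        exact KC i
      intro v
      have := LinearMap.congr_fun heq v
      rw [LinearMap.comp_apply, LinearMap.smul_apply, LinearMap.comp_apply] at this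
      exact this
    -- apply induction hypothesis
    obtain ⟨β, γ, r', hr', d', hd0', hchain', heq', hzero'⟩ := IH n' g
    have hconsb : ∀ i : Fin m, consBasis bB β i.succ = ιB (β i) := by
      intro i
      rw [consBasis_succ, hιB]
    have hconsc : ∀ j : Fin n', consBasis cC γ j.succ = κ (γ j) := by
      intro j
      rw [consBasis_succ, hκ]
    refine ⟨consBasis bB β, consBasis cC γ, r' + 1, by omega,
      Fin.cons p (fun i => p * d' i), ?_, ?_, ?_, ?_⟩
    · intro i
      refine Fin.cases ?_ (fun i' => ?_) i
      · simpa using hp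
      · rw [Fin.cons_succ]
        exact mul_ne_zero hp (hd0' i')
    · intro i j hij
      revert hij
      refine Fin.cases ?_ (fun i' => ?_) i <;> refine Fin.cases ?_ (fun j' => ?_) j <;>
        intro hij
      · exact dvd_rfl
      · rw [Fin.cons_zero, Fin.cons_succ]
        exact dvd_mul_right p _
      · exact absurd hij (by simp [Fin.le_def])
      · rw [Fin.cons_succ, Fin.cons_succ]
        exact mul_dvd_mul_left p (hchain' i' j' (by exact_mod_cast Fin.succ_le_succ_iff.mp hij))
    · intro i h
      revert h
      refine Fin.cases ?_ (fun i' => ?_) i <;> intro h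
      · have e1 : ∀ (hh : (((0 : Fin (m+1)) : ℕ)) < r'+1),
            (⟨((0 : Fin (m+1)) : ℕ), hh⟩ : Fin (r'+1)) = 0 := fun hh => Fin.ext (by simp)
        have e2 : ∀ (hh : (((0 : Fin (m+1)) : ℕ)) < n'+1),
            (⟨((0 : Fin (m+1)) : ℕ), hh⟩ : Fin (n'+1)) = 0 := fun hh => Fin.ext (by simp)
        rw [consBasis_zero, hf0, e1, e2]
        rw [Fin.cons_zero, consBasis_zero]
      · have h' : (i' : ℕ) < r' := by
          simpa [Fin.val_succ] using h
        have hn' : (i' : ℕ) < n' := lt_of_lt_of_le h' (hr'.trans (min_le_right m n'))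
        have e1 : ∀ (hh : (((i'.succ : Fin (m+1)) : ℕ)) < r'+1),
            (⟨((i'.succ : Fin (m+1)) : ℕ), hh⟩ : Fin (r'+1)) = Fin.succ ⟨(i' : ℕ), h'⟩ :=
          fun hh => Fin.ext (by simp)
        have e2 : ∀ (hh : (((i'.succ : Fin (m+1)) : ℕ)) < n'+1),
            (⟨((i'.succ : Fin (m+1)) : ℕ), hh⟩ : Fin (n'+1)) = Fin.succ ⟨(i' : ℕ), hn'⟩ :=
          fun hh => Fin.ext (by simp)
        rw [hconsb i', hrel, heq' i' h', map_smul, smul_smul, e1, e2, Fin.cons_succ,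
          hconsc]
    · intro i h
      revert h
      refine Fin.cases ?_ (fun i' => ?_) i <;> intro h
      · exact absurd h (by simp)
      · rw [hconsb i', hrel, hzero' i' (by simpa [Fin.val_succ, Nat.succ_le_succ_iff] using h),
          map_zero, smul_zero]

end NovAux


end

/-- Singular value decomposition over the Novikov ring R: any R-linear map
f : V → W between finite rank free R-modules admits bases b₁,…,b_m of V and
c₁,…,c_n of W, together with r ≤ min(m,n) and 0 ≤ λ₁ ≤ … ≤ λ_r, such that
f(bᵢ) = t^{λᵢ}·cᵢ for i ≤ r and f(bᵢ) = 0 for i > r. -/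
theorem stmt_0 (k : Type*) [Field k]
    (V W : Type*) [AddCommGroup V] [Module (Nov k) V] [AddCommGroup W] [Module (Nov k) W]
    [Module.Free (Nov k) V] [Module.Finite (Nov k) V]
    [Module.Free (Nov k) W] [Module.Finite (Nov k) W]
    (f : V →ₗ[Nov k] W) :
    ∃ (m n : ℕ) (b : Module.Basis (Fin m) (Nov k) V) (c : Module.Basis (Fin n) (Nov k) W)
      (r : ℕ) (hr : r ≤ min m n) (lam : Fin r → NNReal),
      Monotone lam ∧
      (∀ (i : Fin m) (h : (i : ℕ) < r),
        f (b i) = tpow k (lam ⟨i, h⟩) •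
          c ⟨i, lt_of_lt_of_le h (le_trans hr (min_le_right m n))⟩) ∧
      (∀ i : Fin m, r ≤ (i : ℕ) → f (b i) = 0) := by
  classical
  set m := Module.finrank (Nov k) V with hm
  set n := Module.finrank (Nov k) W with hn
  set E := (Module.finBasis (Nov k) V).equivFun with hE
  set F := (Module.finBasis (Nov k) W).equivFun with hF
  obtain ⟨β, γ, r, hr, d, hd0, hchain, heq, hzero⟩ :=
    NovAux.snf_core k m n (F.toLinearMap ∘ₗ f ∘ₗ E.symm.toLinearMap)
  have key : ∀ v, f (E.symm v)
      = F.symm ((F.toLinearMap ∘ₗ f ∘ₗ E.symm.toLinearMap) v) := by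
    intro v
    rw [LinearMap.comp_apply, LinearMap.comp_apply, LinearEquiv.coe_coe, LinearEquiv.coe_coe,
      LinearEquiv.symm_apply_apply]
  choose uu huu using fun i : Fin r => NovAux.exists_unit (hd0 i)
  refine ⟨m, n, β.map E.symm,
    ((γ.map F.symm).unitsSMul (fun j => if hj : (j : ℕ) < r then uu ⟨j, hj⟩ else 1)),
    r, hr, fun i => (d i).order, ?_, ?_, ?_⟩
  · intro i j hij
    exact NovAux.dvd_order (hd0 j) (hchain i j hij)
  · intro i h
    rw [Module.Basis.map_apply, key, heq i h, map_smul, Module.Basis.unitsSMul_apply]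
    rw [dif_pos (show ((⟨(i : ℕ), lt_of_lt_of_le h (le_trans hr (min_le_right m n))⟩
      : Fin n) : ℕ) < r from h)]
    rw [← huu ⟨(i : ℕ), h⟩, mul_smul]
    rw [Units.smul_def, Module.Basis.map_apply]
  · intro i h
    rw [Module.Basis.map_apply, key, hzero i h, map_zero]
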